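/- Let P_n be the path graph with vertex set {1,…,n} and edges (i,i+1) for 1 ≤ i ≤ n−1, and let C be a configuration on P_n with d_max ≥ 1, where d_max = max_v |v − C(v)| is the maximum geodesic distance between a token's current vertex and its destination. Then there exists a sequence of at most 2·d_max matchings solving the instance (P_n, C); in particular the stretch factor of the lower bound d_max on line graphs is at most 2. -/

import Mathlib

/-- A matching of the graph `G`, encoded as an involution of the vertex set that
moves vertices only along edges of `G`. -/
def IsMatchingPerm {V : Type*} (G : SimpleGraph V) (m : V → V) : Prop :=
  Function.Involutive m ∧ ∀ v, m v = v ∨ G.Adj v (m v)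

/-- The configuration obtained from `C` by applying the sequence of matchings
`ms = [M₁, …, M_k]` (with `M₁` applied first):  `M_k ⋯ M₁ C = C ∘ m₁ ∘ ⋯ ∘ m_k`,
where `(M C)(v) = C (m v)`. -/
def routeSeq {V : Type*} (C : V → V) (ms : List (V → V)) : V → V :=
  C ∘ ms.foldr (· ∘ ·) id

/-- The sequence of matchings `ms = (M₁, …, M_k)` solves the instance `(G, C)`,
i.e. `M_k ⋯ M₁ C = Id`. -/
def Solves {V : Type*} (G : SimpleGraph V) (C : V → V) (ms : List (V → V)) : Prop :=
  (∀ m ∈ ms, IsMatchingPerm G m) ∧ routeSeq C ms = id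

/-- The path graph `P_n` on vertices `{0, …, n-1}` (representing `{1, …, n}`),
with edges `(i, i+1)`. -/
def pathGraph (n : ℕ) : SimpleGraph (Fin n) :=
  SimpleGraph.fromRel fun i j => i.val + 1 = j.val



namespace Stmt6Dev
variable {n : ℕ}

/-- One odd-even comparator round as a "matching permutation": parity `e`. -/
def mstep (e : ℕ) (f : Fin n → Fin n) (i : Fin n) : Fin n :=
  if _h : i.val % 2 = e % 2 then
    if h2 : i.val + 1 < n then
      if f ⟨i.val+1, h2⟩ < f i then ⟨i.val+1, h2⟩ else i
    else i
  else
    if h3 : i.val ≠ 0 then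
      if f i < f ⟨i.val - 1, lt_of_le_of_lt (Nat.pred_le _) i.isLt⟩ then
        ⟨i.val - 1, lt_of_le_of_lt (Nat.pred_le _) i.isLt⟩
      else i
    else i

lemma mstep_cases (e : ℕ) (f : Fin n → Fin n) (i : Fin n) :
    mstep e f i = i ∨
    (∃ h : i.val + 1 < n, i.val % 2 = e % 2 ∧ mstep e f i = ⟨i.val+1, h⟩ ∧ f ⟨i.val+1, h⟩ < f i) ∨
    (∃ h : i.val - 1 < n, i.val % 2 ≠ e % 2 ∧ i.val ≠ 0 ∧ mstep e f i = ⟨i.val-1, h⟩ ∧ f i < f ⟨i.val-1, h⟩) := by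
  unfold mstep
  split_ifs with h h2 h3 h4 h5
  · exact Or.inr (Or.inl ⟨h2, h, rfl, h3⟩)
  · exact Or.inl rfl
  · exact Or.inl rfl
  · exact Or.inr (Or.inr ⟨lt_of_le_of_lt (Nat.pred_le _) i.isLt, h, h4, rfl, h5⟩)
  · exact Or.inl rfl
  · exact Or.inl rfl

lemma mstep_right {e : ℕ} {f : Fin n → Fin n} {i : Fin n} (h : i.val % 2 = e % 2)
    (h2 : i.val + 1 < n) (hlt : f ⟨i.val+1, h2⟩ < f i) : mstep e f i = ⟨i.val+1, h2⟩ := by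
  unfold mstep; split_ifs <;> first | rfl | omega | exact absurd hlt (by assumption)

lemma mstep_left {e : ℕ} {f : Fin n → Fin n} {i : Fin n} (h : ¬ (i.val % 2 = e % 2))
    (h0 : i.val ≠ 0) (hlt : f i < f ⟨i.val - 1, lt_of_le_of_lt (Nat.pred_le _) i.isLt⟩) :
    mstep e f i = ⟨i.val - 1, lt_of_le_of_lt (Nat.pred_le _) i.isLt⟩ := by
  unfold mstep; split_ifs <;> first | rfl | omega | exact absurd hlt (by assumption)

lemma mstep_invol (e : ℕ) (f : Fin n → Fin n) : Function.Involutive (mstep e f) := by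
  intro i
  rcases mstep_cases e f i with h | ⟨h2, hpar, heq, hlt⟩ | ⟨h2, hpar, h0, heq, hlt⟩
  · rw [h, h]
  · rw [heq]
    have hne : ¬ ((⟨i.val+1, h2⟩ : Fin n).val % 2 = e % 2) := by simp only []; omega
    have h0 : (⟨i.val+1, h2⟩ : Fin n).val ≠ 0 := by simp
    rw [mstep_left hne h0 (by simpa using hlt)]
    apply Fin.ext; simp
  · rw [heq]
    have hpar' : ((⟨i.val-1, h2⟩ : Fin n).val) % 2 = e % 2 := by
      show (i.val-1) % 2 = e % 2
      omega
    have hn2 : (⟨i.val-1, h2⟩ : Fin n).val + 1 < n := by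
      show i.val - 1 + 1 < n
      omega
    have : f ⟨(⟨i.val-1, h2⟩ : Fin n).val + 1, hn2⟩ < f ⟨i.val-1, h2⟩ := by
      have hie : (⟨(⟨i.val-1, h2⟩ : Fin n).val + 1, hn2⟩ : Fin n) = i := by
        apply Fin.ext; show i.val - 1 + 1 = i.val; omega
      rw [hie]; exact hlt
    rw [mstep_right hpar' hn2 this]
    apply Fin.ext; simp; omega

lemma mstep_matching (e : ℕ) (f : Fin n → Fin n) :
    IsMatchingPerm (pathGraph n) (mstep e f) := by
  constructor
  · exact mstep_invol e f
  · intro v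
    rcases mstep_cases e f v with h | ⟨h2, _, heq, _⟩ | ⟨h2, _, h0, heq, _⟩
    · exact Or.inl h
    · right; rw [heq]
      unfold pathGraph
      rw [SimpleGraph.fromRel_adj]
      refine ⟨?_, Or.inl rfl⟩
      intro hc; have := congrArg Fin.val hc; simp at this
    · right; rw [heq]
      unfold pathGraph
      rw [SimpleGraph.fromRel_adj]
      refine ⟨?_, Or.inr (by simp only [Fin.val_mk]; omega)⟩
      intro hc; have := congrArg Fin.val hc; simp only [Fin.val_mk] at this; omega

end Stmt6Dev

namespace Stmt6Dev
variable {n : ℕ}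

/-- Count of positions `≥ y` holding values `> c`. -/
def cnt (f : Fin n → Fin n) (c : ℕ) (y : ℤ) : ℕ :=
  (Finset.univ.filter (fun i : Fin n => y ≤ (i.val : ℤ) ∧ c < (f i).val)).card

lemma cnt_antitone (f : Fin n → Fin n) (c : ℕ) {y y' : ℤ} (h : y ≤ y') :
    cnt f c y' ≤ cnt f c y := by
  apply Finset.card_le_card
  intro i hi
  simp only [Finset.mem_filter, Finset.mem_univ, true_and] at *
  exact ⟨le_trans h hi.1, hi.2⟩

lemma cnt_peel_le (f : Fin n → Fin n) (c : ℕ) (y : ℤ) :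
    cnt f c y ≤ cnt f c (y+1) + 1 := by
  classical
  unfold cnt
  have hsub : (Finset.univ.filter (fun i : Fin n => y ≤ (i.val : ℤ) ∧ c < (f i).val)) ⊆
      (Finset.univ.filter (fun i : Fin n => y + 1 ≤ (i.val : ℤ) ∧ c < (f i).val)) ∪
      (Finset.univ.filter (fun i : Fin n => (i.val : ℤ) = y)) := by
    intro i hi
    simp only [Finset.mem_filter, Finset.mem_univ, true_and, Finset.mem_union] at *
    rcases hi with ⟨h1, h2⟩
    by_cases hy : (i.val : ℤ) = y
    · exact Or.inr hy
    · exact Or.inl ⟨by omega, h2⟩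
  calc _ ≤ _ := Finset.card_le_card hsub
    _ ≤ _ + _ := Finset.card_union_le _ _
    _ ≤ _ + 1 := by
        gcongr
        apply Finset.card_le_one.mpr
        intro a ha b hb
        simp only [Finset.mem_filter, Finset.mem_univ, true_and] at ha hb
        apply Fin.ext; omega

lemma cnt_exists (f : Fin n → Fin n) (c : ℕ) (y : ℤ)
    (h : cnt f c (y+1) < cnt f c y) :
    ∃ i : Fin n, (i.val : ℤ) = y ∧ c < (f i).val := by
  classical
  by_contra hc
  push_neg at hc
  have : cnt f c y ≤ cnt f c (y+1) := by
    apply Finset.card_le_card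
    intro i hi
    simp only [cnt, Finset.mem_filter, Finset.mem_univ, true_and] at *
    refine ⟨?_, hi.2⟩
    rcases lt_or_eq_of_le hi.1 with h1 | h1
    · omega
    · exact absurd hi.2 (by simpa using hc i h1.symm)
  omega

lemma cnt_pos_exists (f : Fin n → Fin n) (c : ℕ) (y : ℤ) (h : 1 ≤ cnt f c y) :
    ∃ i : Fin n, y ≤ (i.val : ℤ) ∧ c < (f i).val := by
  classical
  obtain ⟨i, hi⟩ := Finset.card_pos.mp (h : 0 < (Finset.univ.filter
    (fun i : Fin n => y ≤ (i.val : ℤ) ∧ c < (f i).val)).card)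
  simp only [Finset.mem_filter, Finset.mem_univ, true_and] at hi
  exact ⟨i, hi⟩

/-- One comparator round never decreases suffix counts of large values. -/
lemma cnt_step_ge (e : ℕ) (f : Fin n → Fin n) (c : ℕ) (y : ℤ) :
    cnt f c y ≤ cnt (f ∘ mstep e f) c y := by
  classical
  set m := mstep e f with hm
  have hinv : ∀ a, m (m a) = a := fun a => mstep_invol e f a
  have hinj0 : Function.Injective m := Function.Involutive.injective (fun a => hinv a)
  set src := (Finset.univ.filter (fun a : Fin n => y ≤ (a.val : ℤ) ∧ c < (f a).val)) with hsrc
  set tgt := (Finset.univ.filter (fun a : Fin n => y ≤ (a.val : ℤ) ∧ c < (f (m a)).val)) with htgt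
  show src.card ≤ tgt.card
  set φ : Fin n → Fin n := fun a => if y ≤ ((m a).val : ℤ) then m a else a with hφ
  apply Finset.card_le_card_of_injOn φ
  · intro a ha
    simp only [hsrc, htgt, Finset.mem_coe, Finset.mem_filter, Finset.mem_univ, true_and] at ha ⊢
    by_cases hy : y ≤ ((m a).val : ℤ)
    · simp only [hφ, if_pos hy]
      exact ⟨hy, by rw [hinv a]; exact ha.2⟩
    · simp only [hφ, if_neg hy]
      refine ⟨ha.1, ?_⟩
      rcases mstep_cases e f a with h | ⟨hh2, _, heq, hlt⟩ | ⟨hh2, _, _, heq, hlt⟩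
      · rw [← hm] at h; rw [h]; exact ha.2
      · rw [← hm] at heq; exfalso; apply hy; rw [heq]
        show y ≤ ((a.val + 1 : ℕ) : ℤ)
        push_cast; omega
      · rw [← hm] at heq; rw [heq]
        rw [Fin.lt_def] at hlt; omega
  · intro a ha b hb hab
    simp only [hsrc, Finset.coe_filter, Set.mem_setOf_eq, Finset.mem_univ, true_and] at ha hb
    simp only [hφ] at hab
    by_cases ha1 : y ≤ ((m a).val : ℤ) <;> by_cases hb1 : y ≤ ((m b).val : ℤ)
    · rw [if_pos ha1, if_pos hb1] at hab; exact hinj0 hab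
    · rw [if_pos ha1, if_neg hb1] at hab
      exfalso
      have : a = m b := by rw [← hab, hinv a]
      rw [this] at ha; exact hb1 ha.1
    · rw [if_neg ha1, if_pos hb1] at hab
      exfalso
      have : b = m a := by rw [hab, hinv b]
      rw [this] at hb; exact ha1 hb.1
    · rw [if_neg ha1, if_neg hb1] at hab; exact hab

/-- The strict step: an active inverted boundary pair pushes one more large value in. -/
lemma cnt_step_gt (e : ℕ) (f : Fin n → Fin n) (c : ℕ) (y : ℤ) (i j : Fin n)
    (hi : (i.val : ℤ) = y - 1) (hj : (j.val : ℤ) = y)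
    (hpar : i.val % 2 = e % 2) (hO : c < (f i).val) (hnO : (f j).val ≤ c) :
    cnt f c y + 1 ≤ cnt (f ∘ mstep e f) c y := by
  classical
  set m := mstep e f with hm
  have hinv : ∀ a, m (m a) = a := fun a => mstep_invol e f a
  have hinj0 : Function.Injective m := Function.Involutive.injective (fun a => hinv a)
  have hji : j.val = i.val + 1 := by omega
  have h2 : i.val + 1 < n := by rw [← hji]; exact j.isLt
  have hijeq : (⟨i.val + 1, h2⟩ : Fin n) = j := by apply Fin.ext; simp [hji]
  have hstep : m i = j := by
    rw [hm]
    have hfj : f ⟨i.val + 1, h2⟩ < f i := by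
      rw [hijeq, Fin.lt_def]; omega
    rw [mstep_right hpar h2 hfj]; exact hijeq
  have hstepj : m j = i := by rw [← hstep, hinv i]
  set src := (Finset.univ.filter (fun a : Fin n => y ≤ (a.val : ℤ) ∧ c < (f a).val)) with hsrc
  set tgt := (Finset.univ.filter (fun a : Fin n => y ≤ (a.val : ℤ) ∧ c < (f (m a)).val)) with htgt
  have hcnt1 : cnt f c y = src.card := rfl
  have hcnt2 : cnt (f ∘ mstep e f) c y = tgt.card := rfl
  set φ : Fin n → Fin n := fun a => if y ≤ ((m a).val : ℤ) then m a else a with hφ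
  have hmaps : ∀ a ∈ src, φ a ∈ tgt := by
    intro a ha
    simp only [hsrc, htgt, Finset.mem_filter, Finset.mem_univ, true_and] at ha ⊢
    by_cases hy : y ≤ ((m a).val : ℤ)
    · simp only [hφ, if_pos hy]
      exact ⟨hy, by rw [hinv a]; exact ha.2⟩
    · simp only [hφ, if_neg hy]
      refine ⟨ha.1, ?_⟩
      rcases mstep_cases e f a with h | ⟨hh2, _, heq, hlt⟩ | ⟨hh2, _, _, heq, hlt⟩
      · rw [← hm] at h; rw [h]; exact ha.2
      · rw [← hm] at heq; exfalso; apply hy; rw [heq]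
        show y ≤ ((a.val + 1 : ℕ) : ℤ)
        push_cast; omega
      · rw [← hm] at heq; rw [heq]
        rw [Fin.lt_def] at hlt; omega
  have hinj : Set.InjOn φ src := by
    intro a ha b hb hab
    simp only [hsrc, Finset.coe_filter, Set.mem_setOf_eq, Finset.mem_univ, true_and] at ha hb
    simp only [hφ] at hab
    by_cases ha1 : y ≤ ((m a).val : ℤ) <;> by_cases hb1 : y ≤ ((m b).val : ℤ)
    · rw [if_pos ha1, if_pos hb1] at hab; exact hinj0 hab
    · rw [if_pos ha1, if_neg hb1] at hab
      exfalso
      have : a = m b := by rw [← hab, hinv a]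
      rw [this] at ha; exact hb1 ha.1
    · rw [if_neg ha1, if_pos hb1] at hab
      exfalso
      have : b = m a := by rw [hab, hinv b]
      rw [this] at hb; exact ha1 hb.1
    · rw [if_neg ha1, if_neg hb1] at hab; exact hab
  have hjtgt : j ∈ tgt := by
    simp only [htgt, Finset.mem_filter, Finset.mem_univ, true_and]
    exact ⟨le_of_eq hj.symm, by rw [hstepj]; exact hO⟩
  have hjnot : j ∉ src.image φ := by
    intro hmem
    obtain ⟨a, ha, hja⟩ := Finset.mem_image.mp hmem
    simp only [hsrc, Finset.mem_filter, Finset.mem_univ, true_and] at ha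
    simp only [hφ] at hja
    by_cases hy : y ≤ ((m a).val : ℤ)
    · rw [if_pos hy] at hja
      have : a = m j := by rw [← hja, hinv a]
      rw [hstepj] at this
      rw [this] at ha
      omega
    · rw [if_neg hy] at hja
      rw [hja] at ha
      omega
  have hsub : insert j (src.image φ) ⊆ tgt := by
    intro a ha
    rcases Finset.mem_insert.mp ha with h | h
    · rw [h]; exact hjtgt
    · obtain ⟨b, hb, hba⟩ := Finset.mem_image.mp h
      rw [← hba]; exact hmaps b hb
  have hcard : src.card + 1 ≤ tgt.card := by
    have h1 : (insert j (src.image φ)).card = src.card + 1 := by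
      rw [Finset.card_insert_of_notMem hjnot, Finset.card_image_of_injOn hinj]
    rw [← h1]
    exact Finset.card_le_card hsub
  rw [hcnt1, hcnt2]; exact hcard

end Stmt6Dev

namespace Stmt6Dev
variable {n : ℕ}

/-- The orbit of configurations under odd-even comparator rounds. -/
def conf (p0 : Fin n → Fin n) : ℕ → (Fin n → Fin n)
  | 0 => p0
  | (t+1) => conf p0 t ∘ mstep t (conf p0 t)

lemma cnt_conf_mono (p0 : Fin n → Fin n) (c : ℕ) (y : ℤ) {s t : ℕ} (h : s ≤ t) :
    cnt (conf p0 s) c y ≤ cnt (conf p0 t) c y := by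
  induction t with
  | zero => simp_all
  | succ t ih =>
    rcases Nat.lt_or_ge s (t+1) with h1 | h1
    · exact le_trans (ih (by omega)) (cnt_step_ge t (conf p0 t) c y)
    · have : s = t + 1 := by omega
      rw [this]

lemma cnt_insert (f : Fin n → Fin n) (c : ℕ) (y : ℤ) (i : Fin n)
    (hi : (i.val : ℤ) = y) (hO : c < (f i).val) :
    cnt f c (y+1) + 1 ≤ cnt f c y := by
  classical
  have hsub : insert i (Finset.univ.filter
      (fun a : Fin n => y + 1 ≤ (a.val : ℤ) ∧ c < (f a).val)) ⊆
      (Finset.univ.filter (fun a : Fin n => y ≤ (a.val : ℤ) ∧ c < (f a).val)) := by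
    intro a ha
    rcases Finset.mem_insert.mp ha with h | h
    · subst h; simp only [Finset.mem_filter, Finset.mem_univ, true_and]; exact ⟨le_of_eq hi.symm, hO⟩
    · simp only [Finset.mem_filter, Finset.mem_univ, true_and] at h ⊢
      exact ⟨by omega, h.2⟩
  have hnot : i ∉ (Finset.univ.filter
      (fun a : Fin n => y + 1 ≤ (a.val : ℤ) ∧ c < (f a).val)) := by
    simp only [Finset.mem_filter, Finset.mem_univ, true_and]
    intro hcon; omega
  calc cnt f c (y+1) + 1
      = (insert i (Finset.univ.filter
          (fun a : Fin n => y + 1 ≤ (a.val : ℤ) ∧ c < (f a).val))).card := by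
        rw [Finset.card_insert_of_notMem hnot]; rfl
    _ ≤ _ := Finset.card_le_card hsub

/-- The key invariant, by induction over rounds. -/
lemma inv (p0 : Fin n → Fin n) (c : ℕ) (k : ℕ) (γ : ℕ → ℤ)
    (hbase : ∀ r, 1 ≤ r → r ≤ k → r ≤ cnt p0 c (γ r))
    (hbase2 : ∀ r, 1 ≤ r → r ≤ k → γ r < (n:ℤ) - r → cnt p0 c (γ r + 1) < r → Even (γ r))
    (hchain : ∀ r, 2 ≤ r → r ≤ k → cnt p0 c ((n : ℤ) - r) < r → γ r + 2 ≤ γ (r-1)) :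
    ∀ t r, 1 ≤ r → r ≤ k →
      (r ≤ cnt (conf p0 t) c (min ((n:ℤ) - r) (γ r + t)) ∧
       (γ r + t < (n:ℤ) - r → cnt (conf p0 t) c (γ r + t + 1) < r → Even (γ r))) := by
  intro t
  induction t with
  | zero =>
    intro r hr1 hrk
    constructor
    · push_cast
      calc (r:ℕ) ≤ cnt p0 c (γ r) := hbase r hr1 hrk
        _ ≤ cnt (conf p0 0) c (min ((n:ℤ) - r) (γ r + 0)) := by
            apply cnt_antitone
            simpa using min_le_right _ _
    · intro h1 h2
      have h2' : cnt p0 c (γ r + 1) < r := by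
        have he : γ r + ((0:ℕ):ℤ) + 1 = γ r + 1 := by push_cast; ring
        rw [he] at h2
        exact h2
      exact hbase2 r hr1 hrk (by push_cast at h1; omega) h2'
  | succ t ih =>
    intro r hr1 hrk
    push_cast
    have hstep : conf p0 (t+1) = conf p0 t ∘ mstep t (conf p0 t) := rfl
    set g := conf p0 t with hg
    by_cases hhome : (r:ℕ) ≤ cnt p0 c ((n:ℤ) - r)
    · -- home case: always at least r large values in the final window
      have hfin : (r:ℕ) ≤ cnt (conf p0 (t+1)) c ((n:ℤ) - r) :=
        le_trans hhome (cnt_conf_mono p0 c _ (Nat.zero_le _))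
      constructor
      · exact le_trans hfin (cnt_antitone _ _ (min_le_left _ _))
      · intro h1 h2
        exfalso
        have hthis : (r:ℕ) ≤ cnt (conf p0 (t+1)) c (γ r + ((t:ℤ) + 1) + 1) := by
          refine le_trans hfin (cnt_antitone _ _ ?_)
          omega
        omega
    · -- non-home case
      have hIH := ih r hr1 hrk
      have hI := hIH.1
      have hR := hIH.2
      constructor
      · -- the invariant I at t+1
        rcases le_or_gt ((n:ℤ) - r) (γ r + t) with hc | hc
        · -- window already reached
          have h1 : min ((n:ℤ) - r) (γ r + t) = (n:ℤ) - r := min_eq_left hc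
          have h2 : min ((n:ℤ) - r) (γ r + ((t:ℤ)+1)) = (n:ℤ) - r := by
            apply min_eq_left; omega
          rw [h2]
          rw [h1] at hI
          calc (r:ℕ) ≤ cnt g c ((n:ℤ) - r) := hI
            _ ≤ _ := by rw [hstep]; exact cnt_step_ge t g c _
        · set q := γ r + t with hq
          have hminq : min ((n:ℤ) - r) q = q := min_eq_right (le_of_lt hc)
          rw [hminq] at hI
          have hmin2 : min ((n:ℤ) - r) (γ r + ((t:ℤ)+1)) = q + 1 := by
            have he : γ r + ((t:ℤ)+1) = q + 1 := by omega
            rw [he]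
            exact min_eq_right (by omega)
          rw [hmin2]
          rcases le_or_gt (r:ℕ) (cnt g c (q+1)) with hge | hlt
          · calc (r:ℕ) ≤ cnt g c (q+1) := hge
              _ ≤ _ := by rw [hstep]; exact cnt_step_ge t g c _
          · -- critical: use parity and push
            have hEven : Even (γ r) := hR hc hlt
            obtain ⟨i, hi, hiO⟩ := cnt_exists g c q (lt_of_lt_of_le hlt hI)
            have hin : i.val + 1 < n := by
              have : q + 1 ≤ (n:ℤ) - r := by omega
              omega
            set j : Fin n := ⟨i.val + 1, hin⟩ with hj
            have hjval : (j.val : ℤ) = q + 1 := by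
              rw [hj]; push_cast; omega
            by_cases hjO : c < (g j).val
            · exfalso
              -- a large value just above: contradiction with invariant for r-1
              have hone : 1 ≤ cnt g c (q+1) := by
                have := cnt_insert g c (q+1) j hjval hjO
                omega
              have hr2 : 2 ≤ r := by omega
              have hch := hchain r hr2 hrk (by omega)
              have hIr1 := (ih (r-1) (by omega) (by omega)).1
              have hmin3 : q + 2 ≤ min ((n:ℤ) - (r-1:ℕ)) (γ (r-1) + t) := by
                apply le_min
                · push_cast; omega
                · omega
              have h5 : (r:ℕ) - 1 ≤ cnt g c (q + 2) :=
                le_trans hIr1 (cnt_antitone _ _ hmin3)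
              have h6 := cnt_insert g c (q+1) j hjval hjO
              rw [show (q+1+1 : ℤ) = q+2 by ring] at h6
              omega
            · -- swap fires at the boundary
              have hpar : i.val % 2 = t % 2 := by
                obtain ⟨a, ha⟩ := hEven
                omega
              have := cnt_step_gt t g c (q+1) i j (by omega) hjval hpar hiO (by omega)
              have hpeel := cnt_peel_le g c q
              rw [hstep]
              calc (r:ℕ) ≤ cnt g c (q+1) + 1 := by omega
                _ ≤ _ := this
      · -- the parity clause R at t+1
        intro hcrit1 hcrit2
        set q' := γ r + ((t:ℤ)+1) with hq'
        have hq't : q' = γ r + t + 1 := by omega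
        rcases lt_or_ge (cnt g c (γ r + t + 1)) r with hcrt | hncrt
        · exact hR (by omega) hcrt
        · by_contra hodd
          rw [← hq't] at hncrt
          have hq'par : ∀ z : ℤ, z = q' → z % 2 = (t % 2 : ℕ) := by
            intro z hz
            rw [Int.even_iff] at hodd
            omega
          have hlt2 : cnt g c (q' + 1) < r := by
            have : cnt g c (q'+1) ≤ cnt (conf p0 (t+1)) c (q'+1) := by
              rw [hstep]; exact cnt_step_ge t g c _
            omega
          obtain ⟨i, hi, hiO⟩ := cnt_exists g c q' (by rw [hq't] at *; omega)
          have hin : i.val + 1 < n := by omega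
          set j : Fin n := ⟨i.val + 1, hin⟩ with hj
          have hjval : (j.val : ℤ) = q' + 1 := by rw [hj]; push_cast; omega
          by_cases hjO : c < (g j).val
          · have hone : 1 ≤ cnt g c (q'+1) := by
              have := cnt_insert g c (q'+1) j hjval hjO
              omega
            have hr2 : 2 ≤ r := by omega
            have hch := hchain r hr2 hrk (by omega)
            have h6 := cnt_insert g c (q'+1) j hjval hjO
            rw [show (q'+1+1 : ℤ) = q'+2 by ring] at h6
            rcases eq_or_lt_of_le hch with heq2 | hgt2
            · -- boundary case: r-1 critical at t, parity transfer
              have hR1 := (ih (r-1) (by omega) (by omega)).2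
              have hcrA : γ (r-1) + t < (n:ℤ) - (r-1:ℕ) := by
                push_cast
                rw [← heq2]
                omega
              have hcrB : cnt g c (γ (r-1) + t + 1) < r - 1 := by
                have : γ (r-1) + t + 1 = q' + 2 := by rw [← heq2]; omega
                rw [this]
                omega
              have hEv1 := hR1 hcrA hcrB
              rw [← heq2] at hEv1
              apply hodd
              rcases hEv1 with ⟨a, ha⟩
              exact ⟨a - 1, by omega⟩
            · -- strict case: invariant for r-1 directly contradicts
              have hIr1 := (ih (r-1) (by omega) (by omega)).1
              have hmin3 : q' + 2 ≤ min ((n:ℤ) - (r-1:ℕ)) (γ (r-1) + t) := by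
                apply le_min
                · push_cast; omega
                · omega
              have h5 : (r:ℕ) - 1 ≤ cnt g c (q' + 2) :=
                le_trans hIr1 (cnt_antitone _ _ hmin3)
              omega
          · -- swap fires: contradiction with hcrit2
            have hpar : i.val % 2 = t % 2 := by
              have := hq'par ((i.val : ℤ)) hi
              omega
            have hgt := cnt_step_gt t g c (q'+1) i j (by omega) hjval hpar hiO (by omega)
            have hpeel := cnt_peel_le g c q'
            have : (r:ℕ) ≤ cnt (conf p0 (t+1)) c (q'+1) := by
              rw [hstep]
              have : cnt g c q' ≤ cnt g c (q'+1) + 1 := hpeel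
              omega
            omega

end Stmt6Dev

namespace Stmt6Dev
variable {n : ℕ}

lemma card_ge (m : ℕ) (hm : m ≤ n) :
    ((Finset.univ : Finset (Fin n)).filter (fun v : Fin n => m ≤ v.val)).card = n - m := by
  classical
  rcases Nat.eq_or_lt_of_le hm with h | h
  · subst h
    have he : (Finset.univ.filter (fun v : Fin m => m ≤ v.val)) = ∅ := by
      apply Finset.filter_false_of_mem; intro x _; omega
    simp [he]
  · have he : (Finset.univ.filter (fun v : Fin n => m ≤ v.val)) = Finset.Ici (⟨m, h⟩ : Fin n) := by
      ext v; simp [Finset.mem_Ici, Fin.le_def]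
    rw [he, Fin.card_Ici]

lemma cnt_init_lb (C : Fin n ≃ Fin n) (d c r : ℕ)
    (hdisp : ∀ i : Fin n, ((i.val:ℤ) - ((C i).val:ℤ)).natAbs ≤ d)
    (hr1 : 1 ≤ r) (hrk : r + c + 1 ≤ n) (y : ℤ)
    (hy : y ≤ (n:ℤ) - r - d ∨ y ≤ 0) :
    r ≤ cnt (⇑C) c y := by
  classical
  have hcard : ((Finset.univ : Finset (Fin n)).filter (fun v : Fin n => n - r ≤ v.val)).card = r := by
    rw [card_ge (n-r) (by omega)]; omega
  have hle : ((Finset.univ : Finset (Fin n)).filter (fun v : Fin n => n - r ≤ v.val)).card ≤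
      (Finset.univ.filter (fun i : Fin n => y ≤ (i.val : ℤ) ∧ c < ((⇑C) i).val)).card := by
    apply Finset.card_le_card_of_injOn (fun v => C.symm v)
    · intro v hv
      simp only [Finset.mem_coe, Finset.mem_filter, Finset.mem_univ, true_and] at hv ⊢
      have h1 := hdisp (C.symm v)
      rw [Equiv.apply_symm_apply] at h1
      constructor
      · rcases hy with h | h
        · omega
        · omega
      · rw [Equiv.apply_symm_apply]
        omega
    · intro a _ b _ hab
      exact C.symm.injective hab
  calc (r:ℕ) = _ := hcard.symm
    _ ≤ _ := hle

lemma threshold (C : Fin n ≃ Fin n) (d c : ℕ)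
    (hdisp : ∀ i : Fin n, ((i.val:ℤ) - ((C i).val:ℤ)).natAbs ≤ d)
    (hc : c + 2 ≤ n) :
    n - 1 - c ≤ cnt (conf (⇑C) (2*d)) c ((c:ℤ) + 1) := by
  classical
  set p0 : Fin n → Fin n := ⇑C with hp0
  set k := n - 1 - c with hk
  have hk1 : 1 ≤ k := by omega
  set Q : ℕ → ℕ := fun r => Nat.findGreatest (fun y => r ≤ cnt p0 c (y:ℤ)) n with hQ
  have hQspec : ∀ r, 1 ≤ r → r ≤ k → r ≤ cnt p0 c ((Q r : ℕ):ℤ) := by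
    intro r h1 h2
    exact Nat.findGreatest_spec (P := fun y => r ≤ cnt p0 c (y:ℤ)) (m := 0) (Nat.zero_le n)
      (cnt_init_lb C d c r hdisp h1 (by omega) 0 (Or.inr le_rfl))
  have hQub : ∀ r, 1 ≤ r → r ≤ k → (n:ℤ) - r - d ≤ (Q r:ℤ) := by
    intro r h1 h2
    rcases le_or_gt ((n:ℤ) - r - d) 0 with h | h
    · have hge : (0:ℤ) ≤ (Q r:ℤ) := Int.natCast_nonneg _
      omega
    · set m : ℕ := n - r - d with hm
      have hmz : (m:ℤ) = (n:ℤ) - r - d := by omega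
      have hle : m ≤ Q r := Nat.le_findGreatest (by omega)
        (by rw [hmz]; exact cnt_init_lb C d c r hdisp h1 (by omega) _ (Or.inl le_rfl))
      omega
  have hQmax : ∀ r, 1 ≤ r → r ≤ k → cnt p0 c ((Q r:ℤ) + 1) < r := by
    intro r h1 h2
    by_contra hcon
    push_neg at hcon
    obtain ⟨i, hi, _⟩ := cnt_pos_exists p0 c _ (le_trans h1 hcon)
    have hQn : Q r + 1 ≤ n := by
      have := i.isLt; omega
    have hfg := Nat.le_findGreatest (P := fun y => r ≤ cnt p0 c (y:ℤ)) hQn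
      (by push_cast; exact hcon)
    have h9 : Q r + 1 ≤ Q r := hfg
    omega
  have hQsucc : ∀ r, 2 ≤ r → r ≤ k → Q r + 1 ≤ Q (r-1) := by
    intro r h2 hk2
    have hs := hQspec r (by omega) hk2
    have hpeel := cnt_peel_le p0 c ((Q r:ℕ):ℤ)
    have hge : 1 ≤ cnt p0 c ((Q r:ℤ)+1) := by omega
    obtain ⟨i, hi, _⟩ := cnt_pos_exists p0 c _ hge
    have hQn : Q r + 1 ≤ n := by
      have := i.isLt; omega
    have hfg := Nat.le_findGreatest (P := fun y => r - 1 ≤ cnt p0 c (y:ℤ)) hQn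
      (by push_cast; omega)
    exact hfg
  have hn0 : 0 < n := by omega
  set S0 := (Finset.univ.filter (fun i : Fin n => (p0 i).val ≤ c)) with hS0
  have hS0ne : S0.Nonempty := by
    refine ⟨C.symm ⟨0, hn0⟩, ?_⟩
    simp only [hS0, Finset.mem_filter, Finset.mem_univ, true_and, hp0]
    rw [Equiv.apply_symm_apply]
    simp
  set Z := S0.max' hS0ne with hZ
  have hZmem : (p0 Z).val ≤ c := by
    have := S0.max'_mem hS0ne
    simp only [hS0, Finset.mem_filter, Finset.mem_univ, true_and] at this
    exact this
  have hZub : (Z.val:ℤ) ≤ (c:ℤ) + d := by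
    have h1 := hdisp Z
    have h2 : ((C Z).val) ≤ c := hZmem
    omega
  have hZmax : ∀ i : Fin n, c < (p0 i).val ∨ i.val ≤ Z.val := by
    intro i
    by_cases h : (p0 i).val ≤ c
    · right
      exact S0.le_max' i (by simp only [hS0, Finset.mem_filter, Finset.mem_univ, true_and]; exact h)
    · left; omega
  set hgap := n - 1 - Z.val with hh
  have hZlt : Z.val < n := Z.isLt
  have hhome : ∀ r, 1 ≤ r → r ≤ hgap → (r:ℕ) ≤ cnt p0 c ((n:ℤ) - r) := by
    intro r h1 h2
    have hcard : ((Finset.univ : Finset (Fin n)).filter (fun v : Fin n => n - r ≤ v.val)).card = r := by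
      rw [card_ge (n-r) (by omega)]; omega
    have hle : ((Finset.univ : Finset (Fin n)).filter (fun v : Fin n => n - r ≤ v.val)).card ≤
        (Finset.univ.filter (fun i : Fin n => (n:ℤ) - r ≤ (i.val : ℤ) ∧ c < (p0 i).val)).card := by
      apply Finset.card_le_card
      intro i hi
      simp only [Finset.mem_filter, Finset.mem_univ, true_and] at hi ⊢
      rcases hZmax i with h | h
      · exact ⟨by omega, h⟩
      · omega
    calc (r:ℕ) = _ := hcard.symm
      _ ≤ _ := hle
  set ρ : ℕ → ℕ := fun r => r - min r hgap with hρ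
  set γ : ℕ → ℤ := fun r => (Q r : ℤ) - ρ r with hγ
  have hγle : ∀ r, γ r ≤ (Q r : ℤ) := by
    intro r
    simp only [hγ]
    have : (0:ℤ) ≤ (ρ r : ℤ) := Int.natCast_nonneg _
    omega
  have hbase : ∀ r, 1 ≤ r → r ≤ k → r ≤ cnt p0 c (γ r) := fun r h1 h2 =>
    le_trans (hQspec r h1 h2) (cnt_antitone _ _ (hγle r))
  have hbase2 : ∀ r, 1 ≤ r → r ≤ k → γ r < (n:ℤ) - r → cnt p0 c (γ r + 1) < r → Even (γ r) := by
    intro r h1 h2 h3 h4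
    exfalso
    rcases Nat.eq_zero_or_pos (ρ r) with hz | hpos
    · have hrg : r ≤ hgap := by
        simp only [hρ] at hz
        omega
      have hh1 := hhome r h1 hrg
      have hh2 : (r:ℕ) ≤ cnt p0 c (γ r + 1) := le_trans hh1 (cnt_antitone _ _ (by omega))
      omega
    · have hle2 : γ r + 1 ≤ (Q r:ℤ) := by
        simp only [hγ]
        omega
      have := le_trans (hQspec r h1 h2) (cnt_antitone _ _ hle2)
      omega
  have hchain : ∀ r, 2 ≤ r → r ≤ k → cnt p0 c ((n:ℤ) - r) < r → γ r + 2 ≤ γ (r-1) := by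
    intro r h2 hk2 hnh
    have hgl : hgap < r := by
      by_contra hcon
      push_neg at hcon
      exact absurd (hhome r (by omega) hcon) (by omega)
    have hq := hQsucc r h2 hk2
    simp only [hγ, hρ]
    have e1 : min r hgap = hgap := by omega
    have e2 : min (r-1) hgap = hgap := by omega
    rw [e1, e2]
    omega
  have hmain := (inv p0 c k γ hbase hbase2 hchain (2*d) k hk1 le_rfl).1
  have hρk : (ρ k : ℤ) ≤ d := by
    simp only [hρ]
    rcases le_total k hgap with h | h
    · rw [min_eq_left h]; omega
    · rw [min_eq_right h]; omega
  have hQk := hQub k hk1 le_rfl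
  have hminT : min ((n:ℤ) - k) (γ k + ((2*d:ℕ):ℤ)) = (n:ℤ) - k := by
    apply min_eq_left
    have := hγle k
    simp only [hγ]
    push_cast
    omega
  rw [hminT] at hmain
  have hck : (n:ℤ) - k = (c:ℤ) + 1 := by omega
  rw [hck] at hmain
  exact hmain

end Stmt6Dev

namespace Stmt6Dev
variable {n : ℕ}

lemma conf_bij (p0 : Fin n → Fin n) (h : Function.Bijective p0) (t : ℕ) :
    Function.Bijective (conf p0 t) := by
  induction t with
  | zero => exact h
  | succ t ih =>
    exact Function.Bijective.comp ih (mstep_invol t (conf p0 t)).bijective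

lemma conf_id (C : Fin n ≃ Fin n) (d : ℕ)
    (hdisp : ∀ i : Fin n, ((i.val:ℤ) - ((C i).val:ℤ)).natAbs ≤ d) :
    conf (⇑C) (2*d) = id := by
  classical
  set f := conf (⇑C) (2*d) with hf
  have hbij : Function.Bijective f := conf_bij _ C.bijective _
  have hge : ∀ i : Fin n, i.val ≤ (f i).val := by
    intro i
    rcases Nat.eq_zero_or_pos i.val with h0 | h0
    · omega
    · set c := i.val - 1 with hc
      have hc2 : c + 2 ≤ n := by have := i.isLt; omega
      have hth := threshold C d c hdisp hc2
      have hcard : ((Finset.univ : Finset (Fin n)).filter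
          (fun v : Fin n => i.val ≤ v.val)).card = n - i.val :=
        card_ge i.val (le_of_lt i.isLt)
      have hsub : (Finset.univ.filter
            (fun a : Fin n => ((c:ℤ)+1) ≤ (a.val : ℤ) ∧ c < (f a).val)) ⊆
          (Finset.univ.filter (fun v : Fin n => i.val ≤ v.val)) := by
        intro a ha
        simp only [Finset.mem_filter, Finset.mem_univ, true_and] at ha ⊢
        omega
      have heq : (Finset.univ.filter
            (fun a : Fin n => ((c:ℤ)+1) ≤ (a.val : ℤ) ∧ c < (f a).val)) =
          (Finset.univ.filter (fun v : Fin n => i.val ≤ v.val)) := by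
        apply Finset.eq_of_subset_of_card_le hsub
        have hcnt : (n:ℕ) - 1 - c ≤ (Finset.univ.filter
            (fun a : Fin n => ((c:ℤ)+1) ≤ (a.val : ℤ) ∧ c < (f a).val)).card := hth
        omega
      have hmem : i ∈ (Finset.univ.filter
          (fun a : Fin n => ((c:ℤ)+1) ≤ (a.val : ℤ) ∧ c < (f a).val)) := by
        rw [heq]
        simp only [Finset.mem_filter, Finset.mem_univ, true_and]
        omega
      have := (Finset.mem_filter.mp hmem).2
      omega
  have hsum : ∑ i : Fin n, (f i).val = ∑ i : Fin n, i.val :=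
    Function.Bijective.sum_comp hbij (fun v => v.val)
  have hpt := (Finset.sum_eq_sum_iff_of_le (fun i _ => hge i)).mp hsum.symm
  funext i
  have := hpt i (Finset.mem_univ i)
  exact Fin.ext this.symm

lemma foldr_comp_z (l : List (Fin n → Fin n)) (z : Fin n → Fin n) :
    l.foldr (· ∘ ·) z = l.foldr (· ∘ ·) id ∘ z := by
  induction l with
  | nil => rfl
  | cons a l ihl =>
    simp only [List.foldr_cons, ihl]
    rfl

lemma conf_eq_fold (C : Fin n ≃ Fin n) (T : ℕ) :
    conf (⇑C) T = ⇑C ∘ ((List.range T).map (fun t => mstep t (conf (⇑C) t))).foldr (· ∘ ·) id := by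
  induction T with
  | zero => rfl
  | succ T ih =>
    rw [List.range_succ, List.map_append, List.foldr_append]
    simp only [List.map_cons, List.map_nil, List.foldr_cons, List.foldr_nil]
    rw [foldr_comp_z]
    have hstep : conf (⇑C) (T+1) = conf (⇑C) T ∘ mstep T (conf (⇑C) T) := rfl
    rw [hstep, ih]
    rfl

end Stmt6Dev

theorem stmt_6' (n : ℕ) (C : Fin n ≃ Fin n)
    (hd : 1 ≤ Finset.univ.sup fun v : Fin n => ((v.val : ℤ) - ((C v).val : ℤ)).natAbs) :
    ∃ ms : List (Fin n → Fin n), Solves (pathGraph n) (⇑C) ms ∧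
      ms.length ≤ 2 * Finset.univ.sup fun v : Fin n => ((v.val : ℤ) - ((C v).val : ℤ)).natAbs := by
  classical
  set d := Finset.univ.sup (fun v : Fin n => ((v.val : ℤ) - ((C v).val : ℤ)).natAbs) with hd2
  have hdisp : ∀ i : Fin n, ((i.val:ℤ) - ((C i).val:ℤ)).natAbs ≤ d := by
    intro i
    rw [hd2]
    exact Finset.le_sup (f := fun v : Fin n => ((v.val : ℤ) - ((C v).val : ℤ)).natAbs) (Finset.mem_univ i)
  refine ⟨(List.range (2*d)).map (fun t => Stmt6Dev.mstep t (Stmt6Dev.conf (⇑C) t)), ⟨?_, ?_⟩, ?_⟩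
  · intro m hm
    simp only [List.mem_map, List.mem_range] at hm
    obtain ⟨t, _, rfl⟩ := hm
    exact Stmt6Dev.mstep_matching t _
  · show ⇑C ∘ _ = id
    rw [← Stmt6Dev.conf_eq_fold C (2*d)]
    exact Stmt6Dev.conf_id C d hdisp
  · simp

/-- on the path `P_n`, if `d_max = max_v |v - C(v)| ≥ 1`, then there is a
solution of length at most `2 · d_max`; in particular the stretch factor of the lower
bound `d_max` on line graphs is at most 2. -/
theorem stmt_6 (n : ℕ) (C : Fin n ≃ Fin n)
    (hd : 1 ≤ Finset.univ.sup fun v : Fin n => ((v.val : ℤ) - ((C v).val : ℤ)).natAbs) :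
    ∃ ms : List (Fin n → Fin n), Solves (pathGraph n) (⇑C) ms ∧
      ms.length ≤ 2 * Finset.univ.sup fun v : Fin n => ((v.val : ℤ) - ((C v).val : ℤ)).natAbs := by
  exact stmt_6' n C hd
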